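/- In any level of the Calkin-Wilf tree, the j-th fraction from the left is the reciprocal of the j-th fraction from the right; i.e., if the level is the list L of pairs, then L(j) = (a,b) implies L(2^(n-1)+1-j) = (b,a). -/

import Mathlib

/-- Level `n+1` (in the paper's 1-based numbering) of the Calkin–Wilf tree:
`cwLevel 0 = [(1,1)]`, and each pair `(a,b)` is replaced by `(a,a+b), (a+b,b)`
in order to pass to the next level. -/
def cwLevel : ℕ → List (ℕ × ℕ)
  | 0 => [(1, 1)]
  | n + 1 => (cwLevel n).flatMap fun p => [(p.1, p.1 + p.2), (p.1 + p.2, p.2)]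

lemma cw_len (n : ℕ) : (cwLevel n).length = 2 ^ n := by
  induction n with
  | zero => rfl
  | succ n ih =>
    simp only [cwLevel, List.length_flatMap]
    have h : (List.map (List.length ∘ fun p : ℕ×ℕ => [(p.1, p.1 + p.2), (p.1 + p.2, p.2)]) (cwLevel n)) = List.replicate (cwLevel n).length 2 := by
      simp [Function.comp_def]
    simp only [Function.comp_def] at h
    rw [h, List.sum_replicate, ih, pow_succ, smul_eq_mul, Nat.mul_comm]

lemma cw_symm (n : ℕ) : ((cwLevel n).reverse).map Prod.swap = cwLevel n := by
  induction n with
  | zero => rfl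
  | succ n ih =>
    have h2 : (cwLevel n).reverse = (cwLevel n).map Prod.swap := by
      have := congrArg (List.map Prod.swap) ih
      simpa using this
    simp only [cwLevel, List.reverse_flatMap, List.map_flatMap, h2, List.flatMap_map]
    congr 1
    funext p
    simp [Prod.swap, Nat.add_comm]

/-- The `j`-th fraction from the left at a level of the Calkin–Wilf tree is
the reciprocal of the `j`-th fraction from the right: if the `j`-th entry
(1-based; the level `cwLevel n` has `2^n` entries) is `(a,b)`, then the
entry at position `2^n + 1 - j` is `(b,a)`. -/
theorem cw_level_reciprocal (n j a b : ℕ) (h1 : 1 ≤ j) (h2 : j ≤ 2 ^ n)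
    (h : (cwLevel n).getD (j - 1) (0, 0) = (a, b)) :
    (cwLevel n).getD (2 ^ n - j) (0, 0) = (b, a) := by
  have hlen := cw_len n
  have hj : j - 1 < (cwLevel n).length := by rw [hlen]; omega
  have hk : 2 ^ n - j < (cwLevel n).length := by rw [hlen]; omega
  rw [List.getD_eq_getElem _ _ hk]
  rw [List.getD_eq_getElem _ _ hj] at h
  have hs := cw_symm n
  have key : ∀ (hh : 2 ^ n - j < (((cwLevel n).reverse).map Prod.swap).length),
      (((cwLevel n).reverse).map Prod.swap)[2 ^ n - j]'hh = (b, a) := by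
    intro hh
    rw [List.getElem_map, List.getElem_reverse]
    have hi : (cwLevel n).length - 1 - (2 ^ n - j) = j - 1 := by rw [hlen]; omega
    simp only [hi, h]
    rfl
  have hh : 2 ^ n - j < (((cwLevel n).reverse).map Prod.swap).length := by
    simpa [hlen] using hk
  have := key hh
  rw [← this]
  congr 1
  exact hs.symm
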